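/- Let C be a d-circuit and u an internal ×-gate of C that is not the output. Then for every ingoing edge i of u, R(i) equals the disjoint union over outgoing edges o of u of R(o), where R(e) denotes the set of tuples of R(C) whose proof-tree contains edge e. -/
import Mathlib


open Finset

/-- Labels of gates in a `{∪,×}`-circuit: inputs `x/d`, union gates, product gates. -/
inductive GLabel (X D : Type) where
  | inp (x : X) (d : D)
  | union
  | prod

/-- Restriction of a (partial) tuple to a set of attributes. -/
def restrictTup {X D : Type} [DecidableEq X] (τ : X → Option D) (A : Finset X) :
    X → Option D :=
  fun x => if x ∈ A then τ x else none

/-- A `{∪,×}`-circuit on attributes `X` and domain `D`: a finite DAG whose leaves are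
labeled by singleton relations `x/d`, internal gates by `∪` or `×` (with the syntactic
restrictions on attribute sets), together with its semantics `rel`. -/
structure Circuit (X D : Type) [Fintype X] [Fintype D] [DecidableEq X] [DecidableEq D] where
  Gate : Type
  fg : Fintype Gate
  dg : DecidableEq Gate
  children : Gate → Finset Gate
  label : Gate → GLabel X D
  output : Gate
  attrs : Gate → Finset X
  rel : Gate → Finset (X → Option D)
  depth : Gate → ℕ
  depth_lt : ∀ u, ∀ c ∈ children u, depth c < depth u
  inp_no_children : ∀ u x d, label u = .inp x d → children u = ∅
  internal_children_nonempty :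
    ∀ u, (label u = .union ∨ label u = .prod) → (children u).Nonempty
  attrs_inp : ∀ u x d, label u = .inp x d → attrs u = {x}
  attrs_internal :
    ∀ u, (label u = .union ∨ label u = .prod) → attrs u = (children u).biUnion attrs
  union_attrs : ∀ u, label u = .union → ∀ c ∈ children u, attrs c = attrs u
  prod_attrs : ∀ u, label u = .prod →
    ∀ c₁ ∈ children u, ∀ c₂ ∈ children u, c₁ ≠ c₂ → Disjoint (attrs c₁) (attrs c₂)
  rel_support : ∀ u, ∀ τ ∈ rel u, ∀ x, (τ x).isSome ↔ x ∈ attrs u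
  rel_inp : ∀ u x d, label u = .inp x d →
    ∀ τ, τ ∈ rel u ↔ τ = (fun y => if y = x then some d else none)
  rel_union : ∀ u, label u = .union → ∀ τ, τ ∈ rel u ↔ ∃ c ∈ children u, τ ∈ rel c
  rel_prod : ∀ u, label u = .prod →
    ∀ τ, τ ∈ rel u ↔ ((∀ x, (τ x).isSome ↔ x ∈ attrs u) ∧
      ∀ c ∈ children u, restrictTup τ (attrs c) ∈ rel c)

attribute [instance] Circuit.fg Circuit.dg

namespace Circuit

variable {X D : Type} [Fintype X] [Fintype D] [DecidableEq X] [DecidableEq D]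

/-- A d-circuit: every `∪`-gate is disjoint (its children define pairwise
disjoint relations). -/
def DisjointUnions (C : Circuit X D) : Prop :=
  ∀ u, C.label u = .union → ∀ c₁ ∈ C.children u, ∀ c₂ ∈ C.children u,
    c₁ ≠ c₂ → Disjoint (C.rel c₁) (C.rel c₂)

/-- The gates of the proof-tree of a tuple `τ`: the output gate is in, and a child `u`
of an included gate `v` is included iff the restriction of `τ` to the attributes of
the subcircuit rooted at `u` belongs to the relation of `u`. -/
inductive InPT (C : Circuit X D) (τ : X → Option D) : C.Gate → Prop
  | out : InPT C τ C.output
  | step {u v : C.Gate} : InPT C τ v → u ∈ C.children v →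
      restrictTup τ (C.attrs u) ∈ C.rel u → InPT C τ u

/-- An edge `e = (u, v)` (from child `u` to parent `v`) belongs to the proof-tree
of `τ`. -/
def EdgeInPT (C : Circuit X D) (τ : X → Option D) (e : C.Gate × C.Gate) : Prop :=
  C.InPT τ e.2 ∧ e.1 ∈ C.children e.2 ∧ restrictTup τ (C.attrs e.1) ∈ C.rel e.1

/-- The edges of the circuit, directed from child to parent. -/
def edges (C : Circuit X D) : Finset (C.Gate × C.Gate) :=
  Finset.univ.filter (fun e => e.1 ∈ C.children e.2)

/-- Outgoing edges of a gate `u` (towards its parents). -/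
def outEdges (C : Circuit X D) (u : C.Gate) : Finset (C.Gate × C.Gate) :=
  C.edges.filter (fun e => e.1 = u)

/-- Ingoing edges of a gate `u` (from its children). -/
def inEdges (C : Circuit X D) (u : C.Gate) : Finset (C.Gate × C.Gate) :=
  C.edges.filter (fun e => e.2 = u)

open Classical in
/-- `R(e)`: the set of tuples of `R(C)` whose proof-tree contains the edge `e`. -/
noncomputable def relEdge (C : Circuit X D) (e : C.Gate × C.Gate) :
    Finset (X → Option D) :=
  (C.rel C.output).filter (fun τ => C.EdgeInPT τ e)

/-- Soundness of an edge-weighting: flow conservation at non-output `∪`-gates, and at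
`×`-gates all ingoing edges carry the same weight, which (for non-output gates)
equals the sum of the outgoing weights. -/
def Sound (C : Circuit X D) (W : C.Gate × C.Gate → ℝ) : Prop :=
  (∀ u, C.label u = .union → u ≠ C.output →
      ∑ i ∈ C.inEdges u, W i = ∑ o ∈ C.outEdges u, W o) ∧
  (∀ u, C.label u = .prod →
      (∀ i ∈ C.inEdges u, ∀ i' ∈ C.inEdges u, W i = W i') ∧
      (u ≠ C.output → ∀ i ∈ C.inEdges u, W i = ∑ o ∈ C.outEdges u, W o))

end Circuit

namespace Circuit

variable {X D : Type} [Fintype X] [Fintype D] [DecidableEq X] [DecidableEq D]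
variable {C : Circuit X D}

/-- `Desc w v`: `v` is a descendant of `w` (reachable going down children). -/
def Desc (C : Circuit X D) : C.Gate → C.Gate → Prop :=
  Relation.ReflTransGen (fun a b => b ∈ C.children a)

lemma Desc.tail' {w v c : C.Gate} (h : C.Desc w v) (hc : c ∈ C.children v) :
    C.Desc w c :=
  Relation.ReflTransGen.tail h hc

lemma Desc.depth_le {w v : C.Gate} (h : C.Desc w v) : C.depth v ≤ C.depth w := by
  induction h with
  | refl => exact le_rfl
  | tail _ hc ih => exact le_trans (le_of_lt (C.depth_lt _ _ hc)) ih

lemma attrs_child_subset {c p : C.Gate} (hc : c ∈ C.children p) :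
    C.attrs c ⊆ C.attrs p := by
  cases hl : C.label p with
  | inp x d => rw [C.inp_no_children p x d hl] at hc; simp at hc
  | union => rw [C.attrs_internal p (Or.inl hl)]; exact subset_biUnion_of_mem _ hc
  | prod => rw [C.attrs_internal p (Or.inr hl)]; exact subset_biUnion_of_mem _ hc

lemma Desc.attrs_subset {w v : C.Gate} (h : C.Desc w v) : C.attrs v ⊆ C.attrs w := by
  induction h with
  | refl => exact subset_rfl
  | tail _ hc ih => exact (attrs_child_subset hc).trans ih

lemma attrs_nonempty_aux (C : Circuit X D) :
    ∀ n (u : C.Gate), C.depth u ≤ n → (C.attrs u).Nonempty := by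
  intro n
  induction n with
  | zero =>
    intro u hu
    cases hl : C.label u with
    | inp x d => rw [C.attrs_inp u x d hl]; exact ⟨x, mem_singleton_self x⟩
    | union =>
      obtain ⟨c, hc⟩ := C.internal_children_nonempty u (Or.inl hl)
      exact absurd (C.depth_lt u c hc) (by omega)
    | prod =>
      obtain ⟨c, hc⟩ := C.internal_children_nonempty u (Or.inr hl)
      exact absurd (C.depth_lt u c hc) (by omega)
  | succ n ih =>
    intro u hu
    cases hl : C.label u with
    | inp x d => rw [C.attrs_inp u x d hl]; exact ⟨x, mem_singleton_self x⟩
    | union =>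
      obtain ⟨c, hc⟩ := C.internal_children_nonempty u (Or.inl hl)
      obtain ⟨x, hx⟩ := ih c (by have := C.depth_lt u c hc; omega)
      exact ⟨x, (C.attrs_internal u (Or.inl hl)) ▸ mem_biUnion.mpr ⟨c, hc, hx⟩⟩
    | prod =>
      obtain ⟨c, hc⟩ := C.internal_children_nonempty u (Or.inr hl)
      obtain ⟨x, hx⟩ := ih c (by have := C.depth_lt u c hc; omega)
      exact ⟨x, (C.attrs_internal u (Or.inr hl)) ▸ mem_biUnion.mpr ⟨c, hc, hx⟩⟩

lemma attrs_nonempty (u : C.Gate) : (C.attrs u).Nonempty :=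
  attrs_nonempty_aux C (C.depth u) u le_rfl

/-- Two distinct children of a common gate cannot both satisfy the proof-tree
condition and have a common descendant, in a d-circuit. -/
lemma no_common_desc (hd : C.DisjointUnions) (τ : X → Option D)
    {v w₁ w₂ u : C.Gate} (h₁ : w₁ ∈ C.children v) (h₂ : w₂ ∈ C.children v)
    (hne : w₁ ≠ w₂)
    (hr₁ : restrictTup τ (C.attrs w₁) ∈ C.rel w₁)
    (hr₂ : restrictTup τ (C.attrs w₂) ∈ C.rel w₂)
    (hd₁ : C.Desc w₁ u) (hd₂ : C.Desc w₂ u) : False := by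
  cases hl : C.label v with
  | inp x d => rw [C.inp_no_children v x d hl] at h₁; simp at h₁
  | union =>
    have ha : C.attrs w₁ = C.attrs w₂ := by
      rw [C.union_attrs v hl w₁ h₁, C.union_attrs v hl w₂ h₂]
    have hdisj := hd v hl w₁ h₁ w₂ h₂ hne
    rw [ha] at hr₁
    exact (Finset.disjoint_left.mp hdisj (ha ▸ hr₁)) hr₂
  | prod =>
    have hdisj := C.prod_attrs v hl w₁ h₁ w₂ h₂ hne
    obtain ⟨x, hx⟩ := attrs_nonempty u
    exact (Finset.disjoint_left.mp hdisj (hd₁.attrs_subset hx)) (hd₂.attrs_subset hx)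

/-- Conditioned paths: downwards paths along children where every gate after the
start satisfies the proof-tree membership condition. -/
inductive CPath (C : Circuit X D) (τ : X → Option D) (w : C.Gate) : C.Gate → Prop
  | refl : CPath C τ w w
  | step {v c : C.Gate} : CPath C τ w v → c ∈ C.children v →
      restrictTup τ (C.attrs c) ∈ C.rel c → CPath C τ w c

lemma CPath.desc {τ : X → Option D} {w v : C.Gate} (h : C.CPath τ w v) :
    C.Desc w v := by
  induction h with
  | refl => exact Relation.ReflTransGen.refl
  | step _ hc _ ih => exact Relation.ReflTransGen.tail ih hc

lemma CPath.head_cases {τ : X → Option D} {w v : C.Gate} (h : C.CPath τ w v) :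
    v = w ∨ ∃ c, c ∈ C.children w ∧ restrictTup τ (C.attrs c) ∈ C.rel c ∧
      C.CPath τ c v := by
  induction h with
  | refl => exact Or.inl rfl
  | @step v' c hp hc hr ih =>
    rcases ih with rfl | ⟨c', h1, h2, h3⟩
    · exact Or.inr ⟨c, hc, hr, CPath.refl⟩
    · exact Or.inr ⟨c', h1, h2, h3.step hc hr⟩

lemma InPT.cpath {τ : X → Option D} {v : C.Gate} (h : C.InPT τ v) :
    C.CPath τ C.output v := by
  induction h with
  | out => exact CPath.refl
  | step _ hc hr ih => exact ih.step hc hr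

lemma InPT.inversion {τ : X → Option D} {v : C.Gate} (h : C.InPT τ v)
    (hv : v ≠ C.output) :
    ∃ p, C.InPT τ p ∧ v ∈ C.children p ∧ restrictTup τ (C.attrs v) ∈ C.rel v := by
  cases h with
  | out => exact absurd rfl hv
  | step hp hc hr => exact ⟨_, hp, hc, hr⟩

/-- In a d-circuit, a gate with the proof-tree condition has at most one
conditioned-path "parent": uniqueness of the parent in the proof tree. -/
lemma cpath_unique_parent (hd : C.DisjointUnions) (τ : X → Option D) :
    ∀ n (w : C.Gate), C.depth w ≤ n → ∀ v₁ v₂ u, C.CPath τ w v₁ → C.CPath τ w v₂ →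
      u ∈ C.children v₁ → u ∈ C.children v₂ →
      restrictTup τ (C.attrs u) ∈ C.rel u → v₁ = v₂ := by
  intro n
  induction n using Nat.strong_induction_on with
  | _ n ih =>
    intro w hw v₁ v₂ u p₁ p₂ hu₁ hu₂ hru
    rcases p₁.head_cases with rfl | ⟨c₁, hc₁, hr₁, q₁⟩
    · rcases p₂.head_cases with rfl | ⟨c₂, hc₂, hr₂, q₂⟩
      · rfl
      · by_cases hcu : c₂ = u
        · subst hcu
          have h1 := q₂.desc.depth_le
          have h2 := C.depth_lt _ _ hu₂
          omega
        · exact absurd (no_common_desc hd τ hu₁ hc₂ (Ne.symm hcu) hru hr₂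
            Relation.ReflTransGen.refl (q₂.desc.tail' hu₂)) not_false
    · rcases p₂.head_cases with rfl | ⟨c₂, hc₂, hr₂, q₂⟩
      · by_cases hcu : c₁ = u
        · subst hcu
          have h1 := q₁.desc.depth_le
          have h2 := C.depth_lt _ _ hu₁
          omega
        · exact absurd (no_common_desc hd τ hc₁ hu₂ hcu hr₁ hru
            (q₁.desc.tail' hu₁) Relation.ReflTransGen.refl) not_false
      · by_cases hcc : c₁ = c₂
        · subst hcc
          have hdc : C.depth c₁ < n := lt_of_lt_of_le (C.depth_lt w c₁ hc₁) hw
          exact ih (C.depth c₁) hdc c₁ le_rfl v₁ v₂ u q₁ q₂ hu₁ hu₂ hru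
        · exact absurd (no_common_desc hd τ hc₁ hc₂ hcc hr₁ hr₂
            (q₁.desc.tail' hu₁) (q₂.desc.tail' hu₂)) not_false

lemma restrictTup_restrictTup (τ : X → Option D) {A B : Finset X} (h : B ⊆ A) :
    restrictTup (restrictTup τ A) B = restrictTup τ B := by
  funext x
  simp only [restrictTup]
  by_cases hx : x ∈ B
  · simp [hx, h hx]
  · simp [hx]

end Circuit

/-- For an internal (non-output) `×`-gate `u` of a d-circuit and every ingoing edge
`i` of `u`, `R(i)` is the disjoint union over outgoing edges `o` of `u` of `R(o)`. -/
theorem prodGate_inEdge_eq_outEdges {X D : Type} [Fintype X] [Fintype D]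
    [DecidableEq X] [DecidableEq D]
    (C : Circuit X D) (hd : C.DisjointUnions)
    (u : C.Gate) (hlab : C.label u = GLabel.prod) (hout : u ≠ C.output) :
    (∀ i ∈ C.inEdges u, C.relEdge i = (C.outEdges u).biUnion C.relEdge) ∧
    (∀ e₁ ∈ C.outEdges u, ∀ e₂ ∈ C.outEdges u, e₁ ≠ e₂ →
      Disjoint (C.relEdge e₁) (C.relEdge e₂)) := by
  classical
  constructor
  · intro i hi
    have hie : i.1 ∈ C.children i.2 ∧ i.2 = u := by
      simpa [Circuit.inEdges, Circuit.edges] using hi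
    obtain ⟨hic, hi2⟩ := hie
    ext τ
    simp only [Finset.mem_biUnion]
    constructor
    · intro hτ
      rw [Circuit.relEdge, Finset.mem_filter] at hτ
      obtain ⟨hτo, hpt, hc, hr⟩ := hτ
      rw [hi2] at hpt
      obtain ⟨p, hpp, hup, hru⟩ := hpt.inversion hout
      refine ⟨(u, p), ?_, ?_⟩
      · simp [Circuit.outEdges, Circuit.edges, hup]
      · rw [Circuit.relEdge, Finset.mem_filter]
        exact ⟨hτo, hpp, hup, hru⟩
    · rintro ⟨o, ho, hτ⟩
      have hoe : o.1 ∈ C.children o.2 ∧ o.1 = u := by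
        simpa [Circuit.outEdges, Circuit.edges] using ho
      rw [Circuit.relEdge, Finset.mem_filter] at hτ ⊢
      obtain ⟨hτo, hpt2, hmem, hru⟩ := hτ
      rw [hoe.2] at hmem hru
      have hic' : i.1 ∈ C.children u := hi2 ▸ hic
      refine ⟨hτo, ?_, hic, ?_⟩
      · rw [hi2]; exact Circuit.InPT.step hpt2 hmem hru
      · have hcond := ((C.rel_prod u hlab _).mp hru).2 i.1 hic'
        rwa [Circuit.restrictTup_restrictTup τ (Circuit.attrs_child_subset hic')]
          at hcond
  · intro e₁ he₁ e₂ he₂ hne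
    rw [Finset.disjoint_left]
    intro τ h₁ h₂
    have h1e : e₁.1 ∈ C.children e₁.2 ∧ e₁.1 = u := by
      simpa [Circuit.outEdges, Circuit.edges] using he₁
    have h2e : e₂.1 ∈ C.children e₂.2 ∧ e₂.1 = u := by
      simpa [Circuit.outEdges, Circuit.edges] using he₂
    rw [Circuit.relEdge, Finset.mem_filter] at h₁ h₂
    obtain ⟨hτo, hpt1, hm1, hr1⟩ := h₁
    obtain ⟨_, hpt2, hm2, hr2⟩ := h₂
    rw [h1e.2] at hm1 hr1
    rw [h2e.2] at hm2
    have heq : e₁.2 = e₂.2 :=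
      Circuit.cpath_unique_parent hd τ (C.depth C.output) C.output le_rfl
        e₁.2 e₂.2 u hpt1.cpath hpt2.cpath hm1 hm2 hr1
    exact hne (Prod.ext (h1e.2.trans h2e.2.symm) heq)
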